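/- arXiv:2106.09829 — 2 statements merged into one kernel-verified Lean document; each statement's English description precedes it below -/
import Mathlib

section
/- Let G be a finite connected simple graph of order n ≥ 2 and size m, with subdivision graph S(G), and let V denote the set of vertices of S(G) coming from V(G) and S the set of vertices of S(G) coming from E(G). The following statements are equivalent: (i) G contains at least one cycle; (ii) α(S(G)) = |S| = m; (iii) τ(S(G)) = |V| = n. -/
/-- The subdivision graph `S(G)`: vertices are `V(G) ⊕ E(G)`, with `v ∈ V(G)` adjacent to
`e ∈ E(G)` iff `v` is an endpoint of `e`. -/
def subdivision {V : Type*} (G : SimpleGraph V) : SimpleGraph (V ⊕ G.edgeSet) where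
  Adj a b :=
    match a, b with
    | Sum.inl v, Sum.inr e => v ∈ (e : Sym2 V)
    | Sum.inr e, Sum.inl v => v ∈ (e : Sym2 V)
    | _, _ => False
  symm := ⟨by rintro (v | e) (w | f) h <;> simp_all⟩
  loopless := ⟨by rintro (v | e) h <;> simp_all⟩


/-- A subgraph `H` of `G` is a cycle if it is connected (in particular nonempty) and every
vertex of `H` has exactly two neighbours in `H`; for finite graphs this characterizes the
cycle graphs. -/
def SimpleGraph.Subgraph.IsCycleSubgraph {V : Type*} {G : SimpleGraph V}
    (H : G.Subgraph) : Prop :=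
  H.coe.Connected ∧ ∀ v ∈ H.verts, (H.neighborSet v).ncard = 2

section Aux

set_option linter.unusedSectionVars false

open SimpleGraph

variable {V : Type*} {G : SimpleGraph V}


lemma exists_parent (hconn : G.Connected) (r v : V) (hv : v ≠ r) :
    ∃ b, G.Adj v b ∧ G.dist b r < G.dist v r := by
  obtain ⟨p, hp⟩ := (hconn v r).exists_walk_length_eq_dist
  cases p with
  | nil => exact absurd rfl hv
  | cons h q =>
    refine ⟨_, h, ?_⟩
    have h1 := SimpleGraph.dist_le q
    rw [← hp]
    simp only [Walk.length_cons] at *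
    omega

lemma exists_parentMap (hconn : G.Connected) (r : V) :
    ∃ f : V → Sym2 V, (∀ v, v ≠ r → f v ∈ G.edgeSet ∧ v ∈ f v) ∧
      Set.InjOn f {v | v ≠ r} := by
  classical
  choose b hb hd using fun v (h : v ≠ r) => exists_parent hconn r v h
  refine ⟨fun v => if h : v = r then s(v, v) else s(v, b v h), ?_, ?_⟩
  · intro v hv
    simp only [dif_neg hv]
    exact ⟨(hb v hv), by simp⟩
  · intro x hx y hy hxy
    simp only [Set.mem_setOf_eq] at hx hy
    simp only [dif_neg hx, dif_neg hy, Sym2.eq, Sym2.rel_iff', Prod.mk.injEq,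
      Prod.swap_prod_mk] at hxy
    rcases hxy with ⟨h1, _⟩ | ⟨h1, h2⟩
    · exact h1
    · have d1 := hd x hx
      have d2 := hd y hy
      rw [h2] at d1
      rw [← h1] at d2
      omega

section counting

variable [Fintype V]

lemma ncard_sum_decomp (I : Set (V ⊕ G.edgeSet)) :
    I.ncard = (Sum.inl ⁻¹' I).ncard + (Sum.inr ⁻¹' I).ncard := by
  have h : I = Sum.inl '' (Sum.inl ⁻¹' I) ∪ Sum.inr '' (Sum.inr ⁻¹' I) := by
    ext (v | e) <;> simp
  conv_lhs => rw [h]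
  rw [Set.ncard_union_eq ?_ (Set.toFinite _) (Set.toFinite _),
    Set.ncard_image_of_injective _ Sum.inl_injective,
    Set.ncard_image_of_injective _ Sum.inr_injective]
  rw [Set.disjoint_left]
  rintro _ ⟨v, -, rfl⟩ ⟨e, -, h⟩
  simp at h

lemma indep_le_m (hconn : G.Connected) (hnm : Fintype.card V ≤ G.edgeSet.ncard)
    (I : Set (V ⊕ G.edgeSet)) (hI : ∀ a ∈ I, ∀ b ∈ I, ¬ (subdivision G).Adj a b) :
    I.ncard ≤ G.edgeSet.ncard := by
  classical
  set A := Sum.inl ⁻¹' I with hAdef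
  set B := Sum.inr ⁻¹' I with hBdef
  rw [ncard_sum_decomp I]
  by_cases hA : A = Set.univ
  · have hB : B = ∅ := by
      ext e
      simp only [Set.mem_empty_iff_false, iff_false]
      intro he
      have hx : (e : Sym2 V).out.1 ∈ (e : Sym2 V) := Sym2.out_fst_mem _
      have hxA : Sum.inl (e : Sym2 V).out.1 ∈ I := by
        have : (e : Sym2 V).out.1 ∈ A := hA ▸ Set.mem_univ _
        exact this
      exact hI _ hxA _ he hx
    rw [show (Sum.inl ⁻¹' I : Set V) = Set.univ from hA,
      show (Sum.inr ⁻¹' I : Set G.edgeSet) = ∅ from hB]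
    simpa [Set.ncard_univ, Nat.card_eq_fintype_card] using hnm
  · obtain ⟨r, hr⟩ := (Set.ne_univ_iff_exists_notMem A).mp hA
    obtain ⟨f, hf, hinj⟩ := exists_parentMap hconn r
    set B' : Set (Sym2 V) := Subtype.val '' B with hB'def
    have hmaps : ∀ a ∈ A, f a ∈ G.edgeSet \ B' := by
      intro a ha
      have hane : a ≠ r := fun h => hr (h ▸ ha)
      obtain ⟨hfe, hmem⟩ := hf a hane
      refine ⟨hfe, ?_⟩
      rintro ⟨⟨e, he⟩, heB, heq⟩
      refine hI _ ha _ heB ?_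
      show a ∈ ((⟨e, he⟩ : G.edgeSet) : Sym2 V)
      rw [show ((⟨e, he⟩ : G.edgeSet) : Sym2 V) = f a from heq]
      exact hmem
    have h1 : A.ncard ≤ (G.edgeSet \ B').ncard :=
      Set.ncard_le_ncard_of_injOn f hmaps
        (hinj.mono (fun a (ha : a ∈ A) => show a ≠ r from fun h => hr (h ▸ ha)))
        (Set.toFinite _)
    have h2 : B'.ncard = B.ncard := Set.ncard_image_of_injective _ Subtype.val_injective
    have hB'sub : B' ⊆ G.edgeSet := by rintro _ ⟨⟨e, he⟩, -, rfl⟩; exact he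
    have h3 := Set.ncard_diff_add_ncard_of_subset hB'sub (Set.toFinite _)
    rw [← hAdef, ← hBdef]
    omega

end counting

section edgecount

variable [Fintype V]

lemma card_le_ncard_edgeSet_add_one (hconn : G.Connected) :
    Fintype.card V ≤ G.edgeSet.ncard + 1 := by
  classical
  obtain ⟨r⟩ := hconn.nonempty
  obtain ⟨f, hf, hinj⟩ := exists_parentMap hconn r
  have h1 : ({v | v ≠ r} : Set V).ncard ≤ G.edgeSet.ncard :=
    Set.ncard_le_ncard_of_injOn f (fun a ha => (hf a ha).1) hinj (Set.toFinite _)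
  have h2 : ({v | v ≠ r} : Set V) = ({r} : Set V)ᶜ := by
    ext v; simp
  have h3 := Set.ncard_add_ncard_compl ({r} : Set V) (Set.toFinite _) (Set.toFinite _)
  rw [Nat.card_eq_fintype_card, Set.ncard_singleton] at h3
  rw [h2] at h1
  omega

lemma ncard_edgeSet_eq_card_edgeFinset [Fintype G.edgeSet] [DecidableEq V] :
    G.edgeSet.ncard = G.edgeFinset.card := by
  rw [Set.ncard_eq_toFinset_card', Set.toFinset_card, ← SimpleGraph.edgeFinset_card]

lemma acyclic_ncard (hconn : G.Connected) (hacyc : G.IsAcyclic) :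
    G.edgeSet.ncard + 1 = Fintype.card V := by
  classical
  have ht : G.IsTree := ⟨hconn, hacyc⟩
  rw [ncard_edgeSet_eq_card_edgeFinset]
  exact ht.card_edgeFinset

lemma le_ncard_of_not_acyclic (hconn : G.Connected) (h : ¬ G.IsAcyclic) :
    Fintype.card V ≤ G.edgeSet.ncard := by
  classical
  rw [isAcyclic_iff_forall_edge_isBridge] at h
  push_neg at h
  obtain ⟨e, he, hnb⟩ := h
  obtain ⟨⟨x, y⟩, rfl⟩ := e.exists_rep
  have he' : s(x, y) ∈ G.edgeSet := he
  have hGadj : G.Adj x y := he'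
  set G' : SimpleGraph V := G \ SimpleGraph.fromEdgeSet {s(x, y)} with hG'def
  have hreach : G'.Reachable x y := by
    rw [SimpleGraph.isBridge_iff] at hnb
    push_neg at hnb
    exact hnb
  have hstep : ∀ a b, G.Adj a b → G'.Reachable a b := by
    intro a b hab
    by_cases hs : s(a, b) = s(x, y)
    · rcases Sym2.eq_iff.mp hs with ⟨rfl, rfl⟩ | ⟨rfl, rfl⟩
      · exact hreach
      · exact hreach.symm
    · refine SimpleGraph.Adj.reachable ?_
      rw [hG'def]
      simp only [SimpleGraph.sdiff_adj, SimpleGraph.fromEdgeSet_adj, Set.mem_singleton_iff]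
      exact ⟨hab, fun hc => hs hc.1⟩
  have hwalk : ∀ {a b : V} (_ : G.Walk a b), G'.Reachable a b := by
    intro a b p
    induction p with
    | nil => exact SimpleGraph.Reachable.refl _
    | cons h q ih => exact (hstep _ _ h).trans ih
  have hG'conn : G'.Connected := by
    rw [SimpleGraph.connected_iff]
    refine ⟨fun a b => ?_, hconn.nonempty⟩
    obtain ⟨p⟩ := hconn a b
    exact hwalk p
  have hle := card_le_ncard_edgeSet_add_one hG'conn
  have hES : G'.edgeSet = G.edgeSet \ {s(x, y)} := by
    rw [hG'def]
    rw [SimpleGraph.edgeSet_sdiff, SimpleGraph.edgeSet_fromEdgeSet]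
    ext d
    simp only [Set.mem_diff, Set.mem_singleton_iff, Set.mem_setOf_eq]
    constructor
    · rintro ⟨hd, hd2⟩
      refine ⟨hd, fun hc => hd2 ⟨hc, ?_⟩⟩
      rw [hc]
      simp [hGadj.ne]
    · rintro ⟨hd, hd2⟩
      exact ⟨hd, fun hc => hd2 hc.1⟩
  rw [hES] at hle
  have := Set.ncard_diff_singleton_add_one he' (Set.toFinite _)
  omega

end edgecount

section cyclesub

open SimpleGraph Walk

lemma walk_getVert_cons_one {u v w : V} (q : G.Walk v w) (h : G.Adj u v) :
    (Walk.cons h q).getVert 1 = v := by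
  rw [Walk.getVert_cons q h one_ne_zero]; simp

lemma path_nbhd_start {a b : V} (p : G.Walk a b) (hp : p.IsPath) (hnil : ¬ p.Nil) :
    p.toSubgraph.neighborSet a = {p.getVert 1} := by
  cases p with
  | nil => simp at hnil
  | @cons _ x _ h q =>
    have hq := (Walk.cons_isPath_iff h q).mp hp
    ext w
    simp only [Walk.toSubgraph, Subgraph.neighborSet_sup, Set.mem_union,
      SimpleGraph.neighborSet_fst_subgraphOfAdj, Set.mem_singleton_iff,
      Walk.getVert_cons_succ, Walk.getVert_zero]
    constructor
    · rintro (rfl | hw)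
      · simp [walk_getVert_cons_one]
      · exact absurd ((q.mem_verts_toSubgraph).mp hw.fst_mem) hq.2
    · intro hw
      left
      simpa [walk_getVert_cons_one] using hw

lemma first_edge_mem {a b : V} (p : G.Walk a b) (hnil : ¬ p.Nil) :
    s(a, p.getVert 1) ∈ p.edges := by
  cases p with
  | nil => simp at hnil
  | cons h q => simp [walk_getVert_cons_one]

lemma cycle_start_nbhd {u : V} (c : G.Walk u u) (hc : c.IsCycle) :
    (c.toSubgraph.neighborSet u).ncard = 2 := by
  cases c with
  | nil => exact absurd hc Walk.IsCycle.not_of_nil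
  | @cons _ v _ h p =>
    have hlen : 2 ≤ p.length := by
      have := hc.three_le_length
      simp only [Walk.length_cons] at this
      omega
    have hpnil : ¬ p.Nil := by
      rw [Walk.nil_iff_length_eq]
      omega
    have hrnil : ¬ p.reverse.Nil := by
      rw [Walk.nil_iff_length_eq, Walk.length_reverse]
      omega
    obtain ⟨hpath, hedge⟩ := (Walk.cons_isCycle_iff p h).mp hc
    have hrev : p.reverse.toSubgraph.neighborSet u = {p.reverse.getVert 1} :=
      path_nbhd_start p.reverse hpath.reverse hrnil
    rw [Walk.toSubgraph_reverse] at hrev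
    have : (Walk.cons h p).toSubgraph.neighborSet u = {v, p.reverse.getVert 1} := by
      ext w
      simp only [Walk.toSubgraph, Subgraph.neighborSet_sup, Set.mem_union, hrev,
        SimpleGraph.neighborSet_fst_subgraphOfAdj, Set.mem_singleton_iff,
        Set.mem_insert_iff]
    rw [this]
    rw [Set.ncard_pair]
    intro hvr
    apply hedge
    have := first_edge_mem p.reverse hrnil
    rw [Walk.edges_reverse, List.mem_reverse] at this
    rw [← hvr] at this
    exact this

lemma exists_cycleSubgraph_of_not_acyclic (h : ¬ G.IsAcyclic) :
    ∃ H : G.Subgraph, H.IsCycleSubgraph := by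
  classical
  simp only [SimpleGraph.IsAcyclic, not_forall, not_not] at h
  obtain ⟨v, c, hc⟩ := h
  refine ⟨c.toSubgraph, (c.toSubgraph_connected).coe, ?_⟩
  intro w hw
  have hw' : w ∈ c.support := (c.mem_verts_toSubgraph).mp hw
  rw [← Walk.toSubgraph_rotate c hw']
  exact cycle_start_nbhd _ (hc.rotate hw')

lemma not_acyclic_of_cycleSubgraph [Fintype V] (H : G.Subgraph)
    (hH : H.IsCycleSubgraph) : ¬ G.IsAcyclic := by
  classical
  intro hacyc
  obtain ⟨hconnH, hreg⟩ := hH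
  haveI : Fintype H.verts := Fintype.ofFinite _
  haveI : DecidableRel H.coe.Adj := Classical.decRel _
  have hacycH : H.coe.IsAcyclic := by
    intro w c hcyc
    exact hacyc (c.map H.hom) (hcyc.map Subtype.val_injective)
  have ht : H.coe.IsTree := ⟨hconnH, hacycH⟩
  have hcount := ht.card_edgeFinset
  have hsum := SimpleGraph.sum_degrees_eq_twice_card_edges H.coe
  have hdeg : ∀ (w : H.verts) (inst : Fintype (H.coe.neighborSet w)),
      @SimpleGraph.degree _ H.coe w inst = 2 := by
    intro w inst
    haveI : Fintype (H.neighborSet w) := Fintype.ofFinite _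
    rw [Subsingleton.elim inst (SimpleGraph.Subgraph.coeFiniteAt w)]
    rw [SimpleGraph.Subgraph.coe_degree]
    have h2 := hreg w.val w.2
    rwa [← Nat.card_coe_set_eq, Nat.card_eq_fintype_card] at h2
  have h3 := hsum.symm.trans (Finset.sum_congr rfl (fun w _ => hdeg w _))
  simp only [Finset.sum_const, Finset.card_univ, smul_eq_mul] at h3
  omega

end cyclesub

end Aux

/-- For a finite connected simple graph `G` of order `n ≥ 2` and size `m`,
the following are equivalent: (i) `G` contains at least one cycle;
(ii) `α(S(G)) = |S| = m`; (iii) `τ(S(G)) = |V| = n`. -/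
theorem atLeastOneCycle_tfae {V : Type*} [Fintype V] (G : SimpleGraph V)
    (hconn : G.Connected) (hn : 2 ≤ Fintype.card V) :
    List.TFAE
      [ ∃ H : G.Subgraph, H.IsCycleSubgraph,
        IsGreatest {k : ℕ | ∃ I : Set (V ⊕ G.edgeSet),
            (∀ a ∈ I, ∀ b ∈ I, ¬ (subdivision G).Adj a b) ∧ I.ncard = k}
          G.edgeSet.ncard,
        IsLeast {k : ℕ | ∃ C : Set (V ⊕ G.edgeSet),
            (∀ a b, (subdivision G).Adj a b → a ∈ C ∨ b ∈ C) ∧ C.ncard = k}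
          (Fintype.card V) ] := by
  classical
  have hrange_inl : (Set.range (Sum.inl : V → V ⊕ G.edgeSet)).ncard = Fintype.card V := by
    rw [← Set.image_univ, Set.ncard_image_of_injective _ Sum.inl_injective, Set.ncard_univ,
      Nat.card_eq_fintype_card]
  have hrange_inr :
      (Set.range (Sum.inr : G.edgeSet → V ⊕ G.edgeSet)).ncard = G.edgeSet.ncard := by
    rw [← Set.image_univ, Set.ncard_image_of_injective _ Sum.inr_injective, Set.ncard_univ,
      Nat.card_coe_set_eq]
  have hindep_inl : ∀ a ∈ Set.range (Sum.inl : V → V ⊕ G.edgeSet),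
      ∀ b ∈ Set.range (Sum.inl : V → V ⊕ G.edgeSet), ¬ (subdivision G).Adj a b := by
    rintro a ⟨v, rfl⟩ b ⟨w, rfl⟩ hadj
    exact hadj
  have hindep_inr : ∀ a ∈ Set.range (Sum.inr : G.edgeSet → V ⊕ G.edgeSet),
      ∀ b ∈ Set.range (Sum.inr : G.edgeSet → V ⊕ G.edgeSet), ¬ (subdivision G).Adj a b := by
    rintro a ⟨e, rfl⟩ b ⟨f, rfl⟩ hadj
    exact hadj
  have hcover_inl : ∀ a b, (subdivision G).Adj a b →
      a ∈ Set.range (Sum.inl : V → V ⊕ G.edgeSet) ∨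
      b ∈ Set.range (Sum.inl : V → V ⊕ G.edgeSet) := by
    rintro (v | e) (w | f) hadj
    · exact absurd hadj (fun h => h)
    · exact Or.inl ⟨v, rfl⟩
    · exact Or.inr ⟨w, rfl⟩
    · exact absurd hadj (fun h => h)
  have hcover_inr : ∀ a b, (subdivision G).Adj a b →
      a ∈ Set.range (Sum.inr : G.edgeSet → V ⊕ G.edgeSet) ∨
      b ∈ Set.range (Sum.inr : G.edgeSet → V ⊕ G.edgeSet) := by
    rintro (v | e) (w | f) hadj
    · exact absurd hadj (fun h => h)
    · exact Or.inr ⟨f, rfl⟩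
    · exact Or.inl ⟨e, rfl⟩
    · exact Or.inl ⟨e, rfl⟩
  have htotal : Nat.card (V ⊕ G.edgeSet) = Fintype.card V + G.edgeSet.ncard := by
    rw [Nat.card_sum, Nat.card_eq_fintype_card, Nat.card_coe_set_eq]
  have hcyc_of_le : Fintype.card V ≤ G.edgeSet.ncard → ∃ H : G.Subgraph, H.IsCycleSubgraph := by
    intro hnm
    refine exists_cycleSubgraph_of_not_acyclic (fun hacyc => ?_)
    have := acyclic_ncard hconn hacyc
    omega
  tfae_have 1 → 2
  | ⟨H, hH⟩ => by
    have hnm := le_ncard_of_not_acyclic hconn (not_acyclic_of_cycleSubgraph H hH)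
    exact ⟨⟨_, hindep_inr, hrange_inr⟩,
      fun k ⟨I, hI, hk⟩ => hk ▸ indep_le_m hconn hnm I hI⟩
  tfae_have 2 → 3
  | ⟨hmem2, hub⟩ => by
    have hnm : Fintype.card V ≤ G.edgeSet.ncard := by
      rw [← hrange_inl]
      exact hub ⟨_, hindep_inl, rfl⟩
    refine ⟨⟨_, hcover_inl, hrange_inl⟩, ?_⟩
    rintro k ⟨C, hC, rfl⟩
    have hcomp : ∀ a ∈ Cᶜ, ∀ b ∈ Cᶜ, ¬ (subdivision G).Adj a b := by
      intro a ha b hb hadj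
      rcases hC a b hadj with h | h
      · exact ha h
      · exact hb h
    have h1 := indep_le_m hconn hnm Cᶜ hcomp
    have h2 := Set.ncard_add_ncard_compl C (Set.toFinite _) (Set.toFinite _)
    omega
  tfae_have 3 → 1
  | ⟨hmem3, hlb⟩ => by
    have hnm : Fintype.card V ≤ G.edgeSet.ncard := by
      rw [← hrange_inr]
      exact hlb ⟨_, hcover_inr, rfl⟩
    exact hcyc_of_le hnm
  tfae_finish
end

section
/- Let G be a finite connected simple graph of order n ≥ 2, with subdivision graph S(G), and let V denote the set of vertices of S(G) coming from V(G) and S the set of vertices of S(G) coming from E(G). Then every maximum independent set I of S(G) satisfies I = V or I = S if and only if G is a tree or the minimum degree of G satisfies δ(G) ≥ 2. -/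
open Set

private lemma reach_mono' {V : Type*} {G G' : SimpleGraph V}
    (h : ∀ a b : V, G.Adj a b → G'.Reachable a b) {a b : V} (hr : G.Reachable a b) :
    G'.Reachable a b := by
  obtain ⟨p⟩ := hr
  induction p with
  | nil => rfl
  | cons hadj q ih => exact (h _ _ hadj).trans ih

/-- Key counting lemma: if `G` is connected on a finite vertex type, `A` a proper subset of
vertices, `B` a set of edges none of which touches `A`, then `|A| + |B| ≤ |E|`, and strictly
if moreover `A` is nonempty and `δ(G) ≥ 2`. -/
private lemma key_lemma {V : Type*} [Fintype V] {G : SimpleGraph V} (hconn : G.Connected)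
    {A : Set V} {B : Set (Sym2 V)} (hB : B ⊆ G.edgeSet)
    (hAB : ∀ e ∈ B, ∀ a ∈ A, a ∉ e) (hA : A ≠ Set.univ) :
    A.ncard + B.ncard ≤ G.edgeSet.ncard ∧
      (A.Nonempty → (∀ v, 2 ≤ (G.neighborSet v).ncard) →
        A.ncard + B.ncard + 1 ≤ G.edgeSet.ncard) := by
  classical
  obtain ⟨r, hr⟩ : ∃ r, r ∉ A := by
    by_contra h; push_neg at h; exact hA (Set.eq_univ_of_forall h)
  have key : ∀ a : V, a ≠ r → ∃ b, G.Adj a b ∧ G.dist b r < G.dist a r := by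
    intro a ha
    obtain ⟨p, hp⟩ := hconn.exists_walk_length_eq_dist a r
    cases p with
    | nil => exact absurd rfl ha
    | @cons _ b _ hadj q =>
      refine ⟨b, hadj, ?_⟩
      have h1 := SimpleGraph.dist_le q
      simp only [SimpleGraph.Walk.length_cons] at hp
      omega
  let nb : V → V := fun a => if h : a ≠ r then (key a h).choose else a
  have hnb : ∀ a : V, a ≠ r → G.Adj a (nb a) ∧ G.dist (nb a) r < G.dist a r := by
    intro a ha
    simp only [nb, dif_pos ha]
    exact (key a ha).choose_spec
  set f : V → Sym2 V := fun a => s(a, nb a) with hf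
  have haA : ∀ a ∈ A, a ≠ r := fun a ha h => hr (h ▸ ha)
  have hmem : ∀ a ∈ A, f a ∈ G.edgeSet \ B := by
    intro a ha
    exact ⟨(hnb a (haA a ha)).1, fun hB' => hAB _ hB' a ha (Sym2.mem_mk_left _ _)⟩
  have hinj : Set.InjOn f A := by
    intro a1 h1 a2 h2 he
    simp only [hf, Sym2.eq, Sym2.rel_iff', Prod.mk.injEq, Prod.swap_prod_mk] at he
    rcases he with ⟨h, -⟩ | ⟨h, h'⟩
    · exact h
    · have d1 := (hnb a1 (haA a1 h1)).2
      have d2 := (hnb a2 (haA a2 h2)).2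
      rw [h'] at d1
      rw [← h] at d2
      omega
  have himg : f '' A ⊆ G.edgeSet \ B := by
    rintro _ ⟨a, ha, rfl⟩; exact hmem a ha
  have hdiff : (G.edgeSet \ B).ncard = G.edgeSet.ncard - B.ncard :=
    Set.ncard_diff hB (Set.toFinite _)
  have hBle : B.ncard ≤ G.edgeSet.ncard := Set.ncard_le_ncard hB (Set.toFinite _)
  have hAcard : A.ncard = (f '' A).ncard := (Set.ncard_image_of_injOn hinj).symm
  constructor
  · have := Set.ncard_le_ncard himg (Set.toFinite _)
    omega
  · intro hA0 hdeg
    obtain ⟨a, haA', hamax⟩ :=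
      Set.exists_max_image A (fun a => G.dist a r) (Set.toFinite _) hA0
    obtain ⟨c1, c2, hc1, hc2, hcne⟩ :=
      (Set.one_lt_ncard_iff (Set.toFinite _)).1 (lt_of_lt_of_le one_lt_two (hdeg a))
    have hfa : ∀ x, f x = s(x, nb x) := fun _ => rfl
    -- pick an edge at `a` different from `f a`
    obtain ⟨c, hc, hce⟩ : ∃ c, G.Adj a c ∧ s(a, c) ≠ f a := by
      by_cases h1 : s(a, c1) = f a
      · exact ⟨c2, hc2, fun h2 => hcne (Sym2.congr_right.1 (h1.trans h2.symm))⟩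
      · exact ⟨c1, hc1, h1⟩
    have heB : s(a, c) ∈ G.edgeSet \ B :=
      ⟨hc, fun hB' => hAB _ hB' a haA' (Sym2.mem_mk_left _ _)⟩
    have hnotimg : s(a, c) ∉ f '' A := by
      rintro ⟨a', ha', hfa'⟩
      rw [hfa] at hfa'
      simp only [Sym2.eq, Sym2.rel_iff', Prod.mk.injEq, Prod.swap_prod_mk] at hfa'
      rcases hfa' with ⟨h1, h2⟩ | ⟨h1, h2⟩
      · exact hce (by rw [hfa, ← h1, h2])
      · have d := (hnb a' (haA a' ha')).2
        rw [h2] at d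
        exact absurd (hamax a' ha') (by omega)
    have hins : insert s(a, c) (f '' A) ⊆ G.edgeSet \ B := by
      rw [Set.insert_subset_iff]; exact ⟨heB, himg⟩
    have := Set.ncard_le_ncard hins (Set.toFinite _)
    rw [Set.ncard_insert_of_notMem hnotimg (Set.toFinite _)] at this
    omega

private lemma subdiv_adj_inl_inr {V : Type*} {G : SimpleGraph V} (v : V) (e : G.edgeSet) :
    (subdivision G).Adj (Sum.inl v) (Sum.inr e) ↔ v ∈ (e : Sym2 V) := Iff.rfl

/-- Decomposition of an independent set of the subdivision graph. -/
private lemma decomp {V : Type*} [Fintype V] {G : SimpleGraph V}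
    {J : Set (V ⊕ G.edgeSet)} (hJ : ∀ a ∈ J, ∀ b ∈ J, ¬ (subdivision G).Adj a b) :
    ∃ (A : Set V) (B₀ : Set G.edgeSet),
      J = Sum.inl '' A ∪ Sum.inr '' B₀ ∧
      J.ncard = A.ncard + (Subtype.val '' B₀ : Set (Sym2 V)).ncard ∧
      (Subtype.val '' B₀ : Set (Sym2 V)) ⊆ G.edgeSet ∧
      (∀ e ∈ (Subtype.val '' B₀ : Set (Sym2 V)), ∀ a ∈ A, a ∉ e) ∧
      (A = Set.univ → B₀ = ∅) := by
  classical
  set A : Set V := {v | Sum.inl v ∈ J} with hA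
  set B₀ : Set G.edgeSet := {e | Sum.inr e ∈ J} with hB₀
  have hJeq : J = Sum.inl '' A ∪ Sum.inr '' B₀ := by
    ext x
    rcases x with v | e <;> simp [hA, hB₀]
  have hAB : ∀ e ∈ (Subtype.val '' B₀ : Set (Sym2 V)), ∀ a ∈ A, a ∉ e := by
    rintro _ ⟨f, hf, rfl⟩ a ha hmem
    exact hJ _ ha _ hf hmem
  refine ⟨A, B₀, hJeq, ?_, ?_, hAB, ?_⟩
  · rw [hJeq, Set.ncard_union_eq ?_ (Set.toFinite _) (Set.toFinite _),
      Set.ncard_image_of_injective _ Sum.inl_injective,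
      Set.ncard_image_of_injective _ Sum.inr_injective,
      Set.ncard_image_of_injective _ Subtype.val_injective]
    rw [Set.disjoint_left]
    rintro _ ⟨v, -, rfl⟩ ⟨e, -, h⟩
    exact Sum.inr_ne_inl h
  · rintro _ ⟨f, -, rfl⟩
    exact f.2
  · intro hAuniv
    ext f
    simp only [Set.mem_empty_iff_false, iff_false]
    intro hf
    exact hAB _ ⟨f, hf, rfl⟩ _ (hAuniv ▸ Set.mem_univ _) (Sym2.out_fst_mem _)

/-- For a finite connected simple graph `G` of order `n ≥ 2`, every maximum
independent set `I` of `S(G)` satisfies `I = V` or `I = S` (where `V` and `S` are the vertex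
and edge sides of `S(G)`) if and only if `G` is a tree or `δ(G) ≥ 2`. -/
theorem maxIndepSets_subdivision {V : Type*} [Fintype V] (G : SimpleGraph V)
    (hconn : G.Connected) (hn : 2 ≤ Fintype.card V) :
    (∀ I : Set (V ⊕ G.edgeSet),
        (∀ a ∈ I, ∀ b ∈ I, ¬ (subdivision G).Adj a b) →
        (∀ J : Set (V ⊕ G.edgeSet),
          (∀ a ∈ J, ∀ b ∈ J, ¬ (subdivision G).Adj a b) → J.ncard ≤ I.ncard) →
        I = Set.range Sum.inl ∨ I = Set.range Sum.inr) ↔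
      (G.IsTree ∨ ∀ v : V, 2 ≤ (G.neighborSet v).ncard) := by
  classical
  have hVindep : ∀ a ∈ Set.range (Sum.inl : V → V ⊕ G.edgeSet),
      ∀ b ∈ Set.range (Sum.inl : V → V ⊕ G.edgeSet), ¬ (subdivision G).Adj a b := by
    rintro _ ⟨v, rfl⟩ _ ⟨w, rfl⟩ h
    exact h
  have hSindep : ∀ a ∈ Set.range (Sum.inr : G.edgeSet → V ⊕ G.edgeSet),
      ∀ b ∈ Set.range (Sum.inr : G.edgeSet → V ⊕ G.edgeSet), ¬ (subdivision G).Adj a b := by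
    rintro _ ⟨v, rfl⟩ _ ⟨w, rfl⟩ h
    exact h
  have hVcard : (Set.range (Sum.inl : V → V ⊕ G.edgeSet)).ncard = Fintype.card V := by
    rw [← Set.image_univ, Set.ncard_image_of_injective _ Sum.inl_injective, Set.ncard_univ,
      Nat.card_eq_fintype_card]
  have hScard : (Set.range (Sum.inr : G.edgeSet → V ⊕ G.edgeSet)).ncard = G.edgeSet.ncard := by
    rw [← Set.image_univ, Set.ncard_image_of_injective _ Sum.inr_injective, Set.ncard_univ,
      Nat.card_coe_set_eq]
  obtain ⟨r⟩ : Nonempty V := Fintype.card_pos_iff.mp (by omega)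
  have hcompl : ({r}ᶜ : Set V).ncard = Fintype.card V - 1 := by
    have h1 := Set.ncard_add_ncard_compl ({r} : Set V)
    rw [Set.ncard_singleton, Nat.card_eq_fintype_card] at h1
    omega
  have hcomplne : ({r}ᶜ : Set V) ≠ Set.univ :=
    Set.ne_univ_iff_exists_notMem _ |>.2 ⟨r, by simp⟩
  -- upper bound for independent sets when `m ≥ n`
  have hub : Fintype.card V ≤ G.edgeSet.ncard →
      ∀ J : Set (V ⊕ G.edgeSet), (∀ a ∈ J, ∀ b ∈ J, ¬ (subdivision G).Adj a b) →
        J.ncard ≤ G.edgeSet.ncard := by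
    intro hge J hJ
    obtain ⟨A, B₀, hJeq, hJcard, hBsub, hAB, hAuniv⟩ := decomp hJ
    by_cases hA : A = Set.univ
    · have h1 : A.ncard = Fintype.card V := by
        rw [hA, Set.ncard_univ, Nat.card_eq_fintype_card]
      have h2 : (Subtype.val '' B₀ : Set (Sym2 V)).ncard = 0 := by
        rw [hAuniv hA]; simp
      omega
    · have := (key_lemma hconn hBsub hAB hA).1
      omega
  constructor
  · -- forward direction (by contradiction)
    intro H
    by_contra hcon
    push_neg at hcon
    obtain ⟨hnt, v, hv⟩ := hcon
    obtain ⟨w, hvw⟩ : ∃ w, G.Adj v w := by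
      obtain ⟨u, hu⟩ := Fintype.exists_ne_of_one_lt_card (by omega) v
      obtain ⟨p⟩ := hconn v u
      cases p with
      | nil => exact absurd rfl hu
      | cons h q => exact ⟨_, h⟩
    have huniq : ∀ u, G.Adj v u → u = w := by
      have h1 : (G.neighborSet v).ncard ≤ 1 := by omega
      intro u hu
      exact (Set.ncard_le_one (Set.toFinite _)).1 h1 u hu w hvw
    set e : G.edgeSet := ⟨s(v, w), hvw⟩ with he
    -- `G` is not a tree, so `m ≥ n`
    have hmn : Fintype.card V ≤ G.edgeSet.ncard := by
      have hnac : ¬ G.IsAcyclic := fun h => hnt ⟨hconn, h⟩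
      rw [SimpleGraph.isAcyclic_iff_forall_adj_isBridge] at hnac
      push_neg at hnac
      obtain ⟨a, b, hab, hbr⟩ := hnac
      rw [SimpleGraph.isBridge_iff] at hbr
      push_neg at hbr
      have hreach : (G \ SimpleGraph.fromEdgeSet {s(a, b)}).Reachable a b := hbr
      set G' := G \ SimpleGraph.fromEdgeSet {s(a, b)} with hG'
      have hG'conn : G'.Connected := by
        rw [SimpleGraph.connected_iff]
        refine ⟨fun x y => ?_, ⟨v⟩⟩
        refine reach_mono' (fun p q hpq => ?_) (hconn x y)
        by_cases hpq' : s(p, q) = s(a, b)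
        · simp only [Sym2.eq, Sym2.rel_iff', Prod.mk.injEq, Prod.swap_prod_mk] at hpq'
          rcases hpq' with ⟨rfl, rfl⟩ | ⟨rfl, rfl⟩
          · exact hreach
          · exact hreach.symm
        · exact SimpleGraph.Adj.reachable
            ⟨hpq, by rw [SimpleGraph.fromEdgeSet_adj]; tauto⟩
      have hsub : G'.edgeSet ⊆ G.edgeSet \ {s(a, b)} := by
        intro f hf
        refine ⟨SimpleGraph.edgeSet_mono sdiff_le hf, ?_⟩
        intro hfe
        rw [Set.mem_singleton_iff] at hfe
        subst hfe
        rw [SimpleGraph.mem_edgeSet, hG', SimpleGraph.sdiff_adj,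
          SimpleGraph.fromEdgeSet_adj] at hf
        exact hf.2 ⟨rfl, hab.ne⟩
      have h1 : Fintype.card V - 1 ≤ G'.edgeSet.ncard := by
        have := (key_lemma hG'conn (A := {r}ᶜ) (B := ∅) (Set.empty_subset _)
          (by simp) hcomplne).1
        rw [Set.ncard_empty, add_zero, hcompl] at this
        exact this
      have h2 : G'.edgeSet.ncard ≤ G.edgeSet.ncard - 1 := by
        have h3 := Set.ncard_le_ncard hsub (Set.toFinite _)
        rwa [Set.ncard_diff (by simpa using hab) (Set.toFinite _),
          Set.ncard_singleton] at h3
      have h4 : 1 ≤ G.edgeSet.ncard :=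
        Set.ncard_pos (Set.toFinite _) |>.2 ⟨s(v, w), hvw⟩
      omega
    -- the counterexample independent set
    set I₀ : Set (V ⊕ G.edgeSet) := {Sum.inl v} ∪ Sum.inr '' ({e}ᶜ) with hI₀
    have hI₀i : ∀ a ∈ I₀, ∀ b ∈ I₀, ¬ (subdivision G).Adj a b := by
      have hkey : ∀ g : G.edgeSet, g ∈ ({e}ᶜ : Set G.edgeSet) → v ∈ (g : Sym2 V) → False := by
        intro g hg hmem
        obtain ⟨u, hu⟩ := Sym2.mem_iff_exists.1 hmem
        have hadj' : G.Adj v u := by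
          rw [← SimpleGraph.mem_edgeSet, ← hu]; exact g.2
        have := huniq u hadj'
        subst this
        exact hg (by rw [Set.mem_singleton_iff]; exact Subtype.ext hu)
      rintro x hx y hy hadj
      rcases hx with hx | ⟨f, hf, rfl⟩ <;> rcases hy with hy | ⟨g, hg, rfl⟩
      · rw [Set.mem_singleton_iff] at hx hy
        subst hx; subst hy; exact hadj
      · rw [Set.mem_singleton_iff] at hx
        subst hx
        exact hkey g hg hadj
      · rw [Set.mem_singleton_iff] at hy
        subst hy
        exact hkey f hf hadj
      · exact hadj
    have hI₀card : I₀.ncard = G.edgeSet.ncard := by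
      have hdisj : Disjoint ({Sum.inl v} : Set (V ⊕ G.edgeSet)) (Sum.inr '' ({e}ᶜ)) := by
        rw [Set.disjoint_left]
        rintro x hx ⟨g, -, rfl⟩
        rw [Set.mem_singleton_iff] at hx
        exact Sum.inr_ne_inl hx
      rw [hI₀, Set.ncard_union_eq hdisj (Set.toFinite _) (Set.toFinite _),
        Set.ncard_singleton, Set.ncard_image_of_injective _ Sum.inr_injective]
      have hc := Set.ncard_add_ncard_compl ({e} : Set G.edgeSet)
      rw [Set.ncard_singleton, Nat.card_coe_set_eq] at hc
      omega
    have hI₀max : ∀ J : Set (V ⊕ G.edgeSet),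
        (∀ a ∈ J, ∀ b ∈ J, ¬ (subdivision G).Adj a b) → J.ncard ≤ I₀.ncard := by
      intro J hJ
      rw [hI₀card]
      exact hub hmn J hJ
    rcases H I₀ hI₀i hI₀max with h | h
    · haveI : Fintype ↥G.edgeSet := (Set.toFinite _).fintype
      have hm2 : 1 < Fintype.card ↥G.edgeSet := by
        rw [← Nat.card_eq_fintype_card, Nat.card_coe_set_eq]
        omega
      obtain ⟨f, hf⟩ := Fintype.exists_ne_of_one_lt_card hm2 e
      have hmem : Sum.inr f ∈ I₀ := Set.mem_union_right _ ⟨f, hf, rfl⟩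
      rw [h] at hmem
      obtain ⟨x, hx⟩ := hmem
      exact Sum.inl_ne_inr hx
    · have hmem : Sum.inl v ∈ I₀ := Set.mem_union_left _ rfl
      rw [h] at hmem
      obtain ⟨x, hx⟩ := hmem
      exact Sum.inr_ne_inl hx
  · -- backward direction
    rintro hcase I hIi hImax
    have hIV : Fintype.card V ≤ I.ncard := hVcard ▸ hImax _ hVindep
    have hIS : G.edgeSet.ncard ≤ I.ncard := hScard ▸ hImax _ hSindep
    obtain ⟨A, B₀, hIeq, hIcard, hBsub, hAB, hAuniv⟩ := decomp hIi
    by_cases hA : A = Set.univ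
    · left
      rw [hIeq, hA, hAuniv hA]
      simp [Set.image_univ]
    · by_cases hA0 : A = ∅
      · right
        have hBcard : G.edgeSet.ncard ≤ (Subtype.val '' B₀ : Set (Sym2 V)).ncard := by
          rw [hIcard, hA0, Set.ncard_empty] at hIS
          omega
        have hBeq : (Subtype.val '' B₀ : Set (Sym2 V)) = G.edgeSet :=
          Set.eq_of_subset_of_ncard_le hBsub hBcard (Set.toFinite _)
        have hB₀ : B₀ = Set.univ := by
          apply Set.eq_univ_of_forall
          intro f
          have hf : (f : Sym2 V) ∈ (Subtype.val '' B₀ : Set (Sym2 V)) := by rw [hBeq]; exact f.2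
          obtain ⟨g, hg, hgf⟩ := hf
          rwa [Subtype.val_injective hgf] at hg
        rw [hIeq, hA0, hB₀]
        simp [Set.image_univ]
      · exfalso
        rcases hcase with htree | hdeg
        · haveI : Fintype ↥G.edgeSet := (Set.toFinite _).fintype
          have hmn : G.edgeSet.ncard + 1 = Fintype.card V := by
            rw [← Nat.card_coe_set_eq, Nat.card_eq_fintype_card,
              ← SimpleGraph.edgeFinset_card]
            exact htree.card_edgeFinset
          have := (key_lemma hconn hBsub hAB hA).1
          omega
        · have := (key_lemma hconn hBsub hAB hA).2 (Set.nonempty_iff_ne_empty.2 hA0) hdeg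
          omega
end
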